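/- arXiv:2101.11207 — 4 statements merged into one kernel-verified Lean document; each statement's English description precedes it below -/
import Mathlib

section
/- For a standard Gaussian vector w = (w_1, ..., w_d) in R^d, the i-th largest value among |w_1|, ..., |w_d| has second moment E[(w_i^≻)^2] ≤ C·log(2d/i) for an absolute constant C and all 1 ≤ i ≤ d. -/
open MeasureTheory ProbabilityTheory
open scoped ENNReal NNReal

lemma gauss_density' : gaussianReal 0 1
    = MeasureTheory.volume.withDensity fun x => ((gaussianPDFReal 0 1 x).toNNReal : ℝ≥0∞) :=
  gaussianReal_of_var_ne_zero 0 one_ne_zero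

lemma smul_eq_target' : (fun x : ℝ => (gaussianPDFReal 0 1 x).toNNReal • Real.exp (x ^ 2 / 4))
      = fun x : ℝ => (Real.sqrt (2 * Real.pi))⁻¹ * Real.exp (-(1/4 : ℝ) * x ^ 2) := by
  funext x
  rw [NNReal.smul_def, Real.coe_toNNReal _ (gaussianPDFReal_nonneg 0 1 x)]
  simp only [gaussianPDFReal, sub_zero, NNReal.coe_one, mul_one]
  rw [smul_eq_mul, mul_assoc, ← Real.exp_add]
  ring_nf

lemma integrable_exp_quarter' : Integrable (fun x : ℝ => Real.exp (x ^ 2 / 4)) (gaussianReal 0 1) := by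
  rw [gauss_density', integrable_withDensity_iff_integrable_smul
    ((measurable_gaussianPDFReal 0 1).real_toNNReal)]
  rw [smul_eq_target']
  exact (integrable_exp_neg_mul_sq (by norm_num)).const_mul _

lemma integral_exp_quarter' : ∫ x, Real.exp (x ^ 2 / 4) ∂(gaussianReal 0 1) = Real.sqrt 2 := by
  rw [gauss_density', integral_withDensity_eq_integral_smul
    ((measurable_gaussianPDFReal 0 1).real_toNNReal), smul_eq_target',
    integral_const_mul, integral_gaussian]
  rw [← Real.sqrt_inv, ← Real.sqrt_mul (by positivity)]
  rw [show (2 * Real.pi)⁻¹ * (Real.pi / (1/4)) = 2 by field_simp; ring]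

lemma map_eval_pi' {d : ℕ} (j : Fin d) :
    (Measure.pi fun _ : Fin d => gaussianReal 0 1).map (Function.eval j) = gaussianReal 0 1 := by
  ext s hs
  rw [Measure.map_apply (measurable_pi_apply j) hs, Set.eval_preimage, Measure.pi_pi]
  rw [Fintype.prod_eq_single j (fun i hi => by
    rw [Function.update_of_ne hi]; exact measure_univ)]
  rw [Function.update_self]

/-- The decreasing rearrangement of a tuple of reals: `descRearr f i` is the
`i`-th largest value among the `f j`. -/
noncomputable def descRearr {d : ℕ} (f : Fin d → ℝ) : Fin d → ℝ :=
  fun i => (f ∘ Tuple.sort f) i.rev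

lemma pointwise_bound' {d : ℕ} (i : Fin d) (a : ℝ) (w : Fin d → ℝ) :
    (descRearr (fun j => |w j|) i) ^ 2
      ≤ a + (4 * Real.exp (-a/4) / ((i : ℕ) + 1)) * ∑ j, Real.exp ((w j) ^ 2 / 4) := by
  set f : Fin d → ℝ := fun j => |w j| with hf
  set v : ℝ := descRearr f i with hv
  have hv0 : 0 ≤ v := abs_nonneg _
  have h1 : v ^ 2 - a ≤ 4 * Real.exp ((v ^ 2 - a) / 4) := by
    have := Real.add_one_le_exp ((v ^ 2 - a) / 4)
    nlinarith [Real.exp_pos ((v ^ 2 - a) / 4)]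
  have h2 : ((i : ℕ) + 1 : ℝ) * Real.exp (v ^ 2 / 4) ≤ ∑ j, Real.exp ((w j) ^ 2 / 4) := by
    have hperm : ∑ j, Real.exp ((w j) ^ 2 / 4) = ∑ j, Real.exp ((f (Tuple.sort f j)) ^ 2 / 4) := by
      rw [Equiv.sum_comp (Tuple.sort f) (fun j => Real.exp ((f j) ^ 2 / 4))]
      simp [hf, sq_abs]
    rw [hperm]
    have hsub : ∑ j ∈ Finset.Ici i.rev, Real.exp ((f (Tuple.sort f j)) ^ 2 / 4)
        ≤ ∑ j, Real.exp ((f (Tuple.sort f j)) ^ 2 / 4) :=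
      Finset.sum_le_sum_of_subset_of_nonneg (Finset.subset_univ _)
        (fun j _ _ => (Real.exp_pos _).le)
    refine le_trans ?_ hsub
    have hcard : (Finset.Ici i.rev).card = (i : ℕ) + 1 := by
      rw [Fin.card_Ici, Fin.val_rev]; omega
    have hterm : ∀ j ∈ Finset.Ici i.rev, Real.exp (v ^ 2 / 4)
        ≤ Real.exp ((f (Tuple.sort f j)) ^ 2 / 4) := by
      intro j hj
      have hm : v ≤ f (Tuple.sort f j) := Tuple.monotone_sort f (Finset.mem_Ici.mp hj)
      have : v ^ 2 ≤ (f (Tuple.sort f j)) ^ 2 := by nlinarith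
      exact Real.exp_le_exp.mpr (by linarith)
    calc ((i : ℕ) + 1 : ℝ) * Real.exp (v ^ 2 / 4)
        = (Finset.Ici i.rev).card • Real.exp (v ^ 2 / 4) := by
          rw [hcard, nsmul_eq_mul]; push_cast; ring
      _ ≤ ∑ j ∈ Finset.Ici i.rev, Real.exp ((f (Tuple.sort f j)) ^ 2 / 4) :=
          Finset.card_nsmul_le_sum _ _ _ hterm
  have hk : (0 : ℝ) < (i : ℕ) + 1 := by positivity
  have hexp : Real.exp ((v ^ 2 - a) / 4) = Real.exp (-a/4) * Real.exp (v ^ 2 / 4) := by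
    rw [← Real.exp_add]; ring_nf
  have h3 : Real.exp (v ^ 2 / 4) ≤ (∑ j, Real.exp ((w j) ^ 2 / 4)) / ((i : ℕ) + 1) :=
    (le_div_iff₀ hk).mpr (by linarith [h2])
  have h4 : 4 * Real.exp (-a/4) * Real.exp (v ^ 2 / 4)
      ≤ 4 * Real.exp (-a/4) / ((i : ℕ) + 1) * ∑ j, Real.exp ((w j) ^ 2 / 4) := by
    have h5 := mul_le_mul_of_nonneg_left h3
      (le_of_lt (by positivity : (0:ℝ) < 4 * Real.exp (-a/4)))
    calc 4 * Real.exp (-a/4) * Real.exp (v ^ 2 / 4)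
        ≤ 4 * Real.exp (-a/4) * ((∑ j, Real.exp ((w j) ^ 2 / 4)) / ((i : ℕ) + 1)) := h5
      _ = 4 * Real.exp (-a/4) / ((i : ℕ) + 1) * ∑ j, Real.exp ((w j) ^ 2 / 4) := by ring
  rw [hexp] at h1
  linarith

/-- For a standard Gaussian vector `w` in `ℝ^d`, the `i`-th largest value among
`|w 1|, …, |w d|` has second moment at most `C · log(2d/i)`. -/
theorem stmt0 :
    ∃ C : ℝ, 0 < C ∧ ∀ (d : ℕ), 0 < d → ∀ i : Fin d,
      ∫ w : Fin d → ℝ, (descRearr (fun j => |w j|) i) ^ 2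
          ∂(Measure.pi fun _ : Fin d => gaussianReal 0 1)
        ≤ C * Real.log (2 * d / ((i : ℕ) + 1)) := by
  refine ⟨9, by norm_num, ?_⟩
  intro d hd i
  set m : Measure (Fin d → ℝ) := Measure.pi fun _ : Fin d => gaussianReal 0 1 with hm
  haveI : IsProbabilityMeasure m := by
    rw [hm]; infer_instance
  have hk : (0 : ℝ) < (i : ℕ) + 1 := by positivity
  have hd0 : (0 : ℝ) < d := by exact_mod_cast hd
  have hkd : ((i : ℕ) + 1 : ℝ) ≤ d := by exact_mod_cast i.isLt
  have hratio : (0 : ℝ) < 2 * d / ((i : ℕ) + 1) := by positivity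
  set L : ℝ := Real.log (2 * d / ((i : ℕ) + 1)) with hL
  have hL2 : Real.log 2 ≤ L := by
    apply Real.log_le_log (by norm_num)
    rw [le_div_iff₀ hk]; linarith
  set a : ℝ := 4 * L with ha
  -- integrability of coordinate functions
  have hcont : Continuous fun x : ℝ => Real.exp (x ^ 2 / 4) :=
    Real.continuous_exp.comp ((continuous_pow 2).div_const 4)
  have hint1 : ∀ j : Fin d, Integrable (fun w : Fin d → ℝ => Real.exp ((w j) ^ 2 / 4)) m := by
    intro j
    have h := integrable_exp_quarter'
    rw [← map_eval_pi' j] at h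
    exact (integrable_map_measure hcont.aestronglyMeasurable
      (measurable_pi_apply j).aemeasurable).mp h
  have hval1 : ∀ j : Fin d, ∫ w, Real.exp ((w j) ^ 2 / 4) ∂m = Real.sqrt 2 := by
    intro j
    rw [← integral_exp_quarter', ← map_eval_pi' j]
    rw [integral_map (measurable_pi_apply j).aemeasurable hcont.aestronglyMeasurable]
  set c : ℝ := 4 * Real.exp (-a/4) / ((i : ℕ) + 1) with hc
  have hsum : Integrable (fun w : Fin d → ℝ => ∑ j, Real.exp ((w j) ^ 2 / 4)) m :=
    integrable_finset_sum _ (fun j _ => hint1 j)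
  have hRHS : Integrable (fun w : Fin d → ℝ => a + c * ∑ j, Real.exp ((w j) ^ 2 / 4)) m :=
    (integrable_const a).add (hsum.const_mul c)
  have key : ∫ w, (descRearr (fun j => |w j|) i) ^ 2 ∂m
      ≤ ∫ w, (a + c * ∑ j, Real.exp ((w j) ^ 2 / 4)) ∂m := by
    apply integral_mono_of_nonneg (ae_of_all _ fun w => sq_nonneg _) hRHS
    exact ae_of_all _ fun w => pointwise_bound' i a w
  have hval : ∫ w, (a + c * ∑ j, Real.exp ((w j) ^ 2 / 4)) ∂m = a + c * (d * Real.sqrt 2) := by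
    rw [integral_add (integrable_const a) (hsum.const_mul c), integral_const,
      integral_const_mul, integral_finset_sum _ (fun j _ => hint1 j)]
    simp only [hval1, Finset.sum_const, Finset.card_univ, Fintype.card_fin, nsmul_eq_mul,
      measure_univ, ENNReal.toReal_one, smul_eq_mul, one_mul, probReal_univ]
  have hexpa : Real.exp (-a/4) = ((i : ℕ) + 1) / (2 * d) := by
    rw [show -a/4 = -L by ring, Real.exp_neg, hL, Real.exp_log hratio]
    rw [inv_div]
  have hcval : c * (d * Real.sqrt 2) = 2 * Real.sqrt 2 := by
    rw [hc, hexpa]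
    field_simp
    ring
  have hfin : a + 2 * Real.sqrt 2 ≤ 9 * L := by
    have hs2 : Real.sqrt 2 ≤ 1.5 := by
      rw [show (1.5 : ℝ) = Real.sqrt (1.5 ^ 2) by rw [Real.sqrt_sq]; norm_num]
      apply Real.sqrt_le_sqrt; norm_num
    have hlog2 : (0.6931471803 : ℝ) < Real.log 2 := Real.log_two_gt_d9
    rw [ha]; linarith
  calc ∫ w, (descRearr (fun j => |w j|) i) ^ 2 ∂m
      ≤ a + c * (d * Real.sqrt 2) := by rw [← hval]; exact key
    _ = a + 2 * Real.sqrt 2 := by rw [hcval]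
    _ ≤ 9 * L := hfin
end

section
/- For vectors v_1, ..., v_m in C^d and any unit vector w ∈ C^d, one has ∑_{i=1}^m |⟨w, v_i⟩|^2 ≤ max_{i ∈ [m]} ∑_{j=1}^m |⟨v_i, v_j⟩| (Selberg's inequality). -/
/-- Selberg's inequality: for vectors `v 1, …, v m` in `ℂ^d` and any unit vector `w`,
`∑ i |⟨w, v i⟩|² ≤ max_i ∑ j |⟨v i, v j⟩|` (the maximum being witnessed by some `i`). -/
theorem stmt1 (d m : ℕ) (hm : 0 < m) (v : Fin m → EuclideanSpace ℂ (Fin d))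
    (w : EuclideanSpace ℂ (Fin d)) (hw : ‖w‖ = 1) :
    ∃ i : Fin m,
      ∑ j : Fin m, ‖(inner ℂ w (v j) : ℂ)‖ ^ 2 ≤ ∑ j : Fin m, ‖(inner ℂ (v i) (v j) : ℂ)‖ := by
  classical
  set x : Fin m → ℂ := fun j => inner ℂ w (v j) with hxdef
  set a : Fin m → Fin m → ℝ := fun i j => ‖(inner ℂ (v i) (v j) : ℂ)‖ with hadef
  obtain ⟨i₀, -, hi₀⟩ := Finset.exists_max_image (Finset.univ : Finset (Fin m))
      (fun i => ∑ j, a i j) ⟨⟨0, hm⟩, Finset.mem_univ _⟩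
  refine ⟨i₀, ?_⟩
  set M := ∑ j, a i₀ j with hMdef
  set S := ∑ j, ‖x j‖ ^ 2 with hSdef
  set u : EuclideanSpace ℂ (Fin d) := ∑ j, (starRingEnd ℂ) (x j) • v j with hudef
  have hSnn : 0 ≤ S := Finset.sum_nonneg fun j _ => sq_nonneg _
  have hMnn : 0 ≤ M := Finset.sum_nonneg fun j _ => norm_nonneg _
  have hasymm : ∀ i j, a i j = a j i := by
    intro i j
    simp only [hadef]
    rw [← inner_conj_symm (v j) (v i), RCLike.norm_conj]
  have hwu : (inner ℂ w u : ℂ) = (S : ℂ) := by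
    simp only [hudef, inner_sum, inner_smul_right, hSdef]
    push_cast
    refine Finset.sum_congr rfl fun j _ => ?_
    rw [show (inner ℂ w (v j) : ℂ) = x j from rfl, RCLike.conj_mul]
    norm_cast
  have h1 : S ≤ ‖u‖ := by
    calc S = ‖(inner ℂ w u : ℂ)‖ := by rw [hwu]; simp [Complex.norm_real, abs_of_nonneg hSnn]
    _ ≤ ‖w‖ * ‖u‖ := norm_inner_le_norm _ _
    _ = ‖u‖ := by rw [hw, one_mul]
  have huu : (inner ℂ u u : ℂ) = ∑ i, ∑ j, x i * ((starRingEnd ℂ) (x j) * inner ℂ (v i) (v j)) := by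
    rw [hudef, sum_inner]
    refine Finset.sum_congr rfl fun i _ => ?_
    rw [inner_sum]
    refine Finset.sum_congr rfl fun j _ => ?_
    rw [inner_smul_left, inner_smul_right, Complex.conj_conj]
  have key : ‖u‖ ^ 2 ≤ ∑ i, ∑ j, ‖x i‖ * ‖x j‖ * a i j := by
    have h0 : ‖u‖ ^ 2 = RCLike.re (inner ℂ u u : ℂ) := by
      rw [← @norm_sq_eq_re_inner ℂ]
    rw [h0]
    calc RCLike.re (inner ℂ u u : ℂ) ≤ ‖(inner ℂ u u : ℂ)‖ := RCLike.re_le_norm _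
    _ ≤ ∑ i, ∑ j, ‖x i‖ * ‖x j‖ * a i j := by
        rw [huu]
        refine (norm_sum_le _ _).trans (Finset.sum_le_sum fun i _ => ?_)
        refine (norm_sum_le _ _).trans (Finset.sum_le_sum fun j _ => ?_)
        rw [norm_mul, norm_mul, RCLike.norm_conj, ← mul_assoc]
  have hswap : ∑ i, ∑ j, ‖x j‖ ^ 2 * a i j = ∑ i, ∑ j, ‖x i‖ ^ 2 * a i j := by
    rw [Finset.sum_comm]
    exact Finset.sum_congr rfl fun i _ => Finset.sum_congr rfl fun j _ => by rw [hasymm]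
  have h2 : ‖u‖ ^ 2 ≤ S * M := by
    calc ‖u‖ ^ 2 ≤ ∑ i, ∑ j, ‖x i‖ * ‖x j‖ * a i j := key
    _ ≤ ∑ i, ∑ j, (‖x i‖ ^ 2 + ‖x j‖ ^ 2) / 2 * a i j := by
        refine Finset.sum_le_sum fun i _ => Finset.sum_le_sum fun j _ => ?_
        have h : ‖x i‖ * ‖x j‖ ≤ (‖x i‖ ^ 2 + ‖x j‖ ^ 2) / 2 := by
          nlinarith [sq_nonneg (‖x i‖ - ‖x j‖)]
        exact mul_le_mul_of_nonneg_right h (norm_nonneg _)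
    _ = (∑ i, ∑ j, ‖x i‖ ^ 2 * a i j + ∑ i, ∑ j, ‖x j‖ ^ 2 * a i j) / 2 := by
        rw [← Finset.sum_add_distrib, Finset.sum_div]
        refine Finset.sum_congr rfl fun i _ => ?_
        rw [← Finset.sum_add_distrib, Finset.sum_div]
        exact Finset.sum_congr rfl fun j _ => by ring
    _ = ∑ i, ∑ j, ‖x i‖ ^ 2 * a i j := by rw [hswap, add_self_div_two]
    _ = ∑ i, ‖x i‖ ^ 2 * ∑ j, a i j := by
        exact Finset.sum_congr rfl fun i _ => (Finset.mul_sum _ _ _).symm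
    _ ≤ ∑ i, ‖x i‖ ^ 2 * M := by
        refine Finset.sum_le_sum fun i _ => ?_
        exact mul_le_mul_of_nonneg_left (hi₀ i (Finset.mem_univ i)) (sq_nonneg _)
    _ = S * M := by rw [hSdef, ← Finset.sum_mul]
  show S ≤ M
  nlinarith [h1, h2, hSnn, hMnn, sq_nonneg (S - M)]
end

section
/- Let k ≤ 2^i and suppose u ∈ R^{2^i} (viewed inside R^d via the first 2^i coordinates) is a unit vector satisfying ∑_{j∈S} u_j^2 ≤ C/(log(2^{i+1}/|S|))^4 for all nonempty S ⊆ [2^i]. If w is any unit vector supported on the first 2^j coordinates with j ≤ i, then |⟨u^≻, w^≻⟩| ≤ C'/(log(2^{i+1}/2^j))^2, where x^≻ denotes the decreasing rearrangement of the absolute values of the coordinates of x. -/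
lemma descRearr_eq {d : ℕ} (f : Fin d → ℝ) (l : Fin d) :
    descRearr f l = f ((Fin.revPerm.trans (Tuple.sort f)) l) := rfl

lemma descRearr_antitone {d : ℕ} (f : Fin d → ℝ) : Antitone (descRearr f) := by
  intro a b h
  exact Tuple.monotone_sort f (Fin.rev_le_rev.mpr h)

lemma sum_descRearr_comp {d : ℕ} (f : Fin d → ℝ) (g : ℝ → ℝ) :
    ∑ l, g (descRearr f l) = ∑ l, g (f l) :=
  Equiv.sum_comp (Fin.revPerm.trans (Tuple.sort f)) (g ∘ f)

lemma card_filter_lt {d n : ℕ} :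
    (Finset.univ.filter (fun x : Fin d => (x:ℕ) < n)).card ≤ n := by
  classical
  calc (Finset.univ.filter (fun x : Fin d => (x:ℕ) < n)).card
      = ((Finset.univ.filter (fun x : Fin d => (x:ℕ) < n)).image Fin.val).card := by
        rw [Finset.card_image_of_injective _ Fin.val_injective]
    _ ≤ (Finset.range n).card := by
        apply Finset.card_le_card
        intro x hx
        simp only [Finset.mem_image, Finset.mem_filter] at hx
        obtain ⟨y, ⟨_, hy⟩, rfl⟩ := hx
        simpa using hy
    _ = n := Finset.card_range n

lemma descRearr_eq_zero {d n : ℕ} (f : Fin d → ℝ) (hf : ∀ x, 0 ≤ f x)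
    (hsupp : ∀ x : Fin d, n ≤ (x:ℕ) → f x = 0) (l : Fin d) (hl : n ≤ (l:ℕ)) :
    descRearr f l = 0 := by
  classical
  by_contra h
  have hpos : 0 < descRearr f l := lt_of_le_of_ne (by rw [descRearr_eq]; exact hf _) (Ne.symm h)
  set e := Fin.revPerm.trans (Tuple.sort f) with he
  have key : ∀ m : Fin d, m ≤ l → (e m : ℕ) < n := by
    intro m hm
    by_contra hn
    push_neg at hn
    have h0 : descRearr f m = 0 := by rw [descRearr_eq]; exact hsupp _ hn
    have := descRearr_antitone f hm
    linarith
  have hcard : (Finset.Iic l).card ≤ (Finset.univ.filter (fun x : Fin d => (x:ℕ) < n)).card := by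
    apply Finset.card_le_card_of_injOn e
    · intro m hm
      simp only [Finset.coe_filter, Finset.mem_coe, Finset.mem_filter, Finset.mem_univ, true_and, Set.mem_setOf_eq]
      exact key m (Finset.mem_Iic.mp hm)
    · exact fun a _ b _ hab => e.injective hab
  have h1 : (Finset.Iic l).card = (l:ℕ) + 1 := by simp [Fin.card_Iic]
  have := card_filter_lt (d := d) (n := n)
  omega


/-- If `u` is a unit vector supported on the first `2^i` coordinates satisfying the
delocalization bound `∑_{l∈S} u l² ≤ C/(log(2^{i+1}/|S|))⁴`, and `w` is a unit vector
supported on the first `2^j` coordinates with `j ≤ i`, then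
`|⟨u^≻, w^≻⟩| ≤ C'/(log(2^{i+1}/2^j))²`. -/
theorem stmt6 (C : ℝ) (hC : 0 < C) :
    ∃ C' : ℝ, 0 < C' ∧
      ∀ (d i j k : ℕ), k ≤ 2 ^ i → j ≤ i → 2 ^ i ≤ d →
        ∀ u w : Fin d → ℝ,
          (∀ l : Fin d, 2 ^ i ≤ (l : ℕ) → u l = 0) →
          Real.sqrt (∑ l : Fin d, u l ^ 2) = 1 →
          (∀ S : Finset (Fin d), S.Nonempty → (∀ l ∈ S, (l : ℕ) < 2 ^ i) →
            ∑ l ∈ S, u l ^ 2 ≤ C / (Real.log ((2 : ℝ) ^ (i + 1) / S.card)) ^ 4) →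
          (∀ l : Fin d, 2 ^ j ≤ (l : ℕ) → w l = 0) →
          Real.sqrt (∑ l : Fin d, w l ^ 2) = 1 →
          |∑ l : Fin d, descRearr (fun m => |u m|) l * descRearr (fun m => |w m|) l|
            ≤ C' / (Real.log ((2 : ℝ) ^ (i + 1) / 2 ^ j)) ^ 2 := by
  classical
  refine ⟨Real.sqrt C, Real.sqrt_pos.mpr hC, ?_⟩
  intro d i j k hk hji hd u w hu hun hdel hw hwn
  set fu : Fin d → ℝ := fun m => |u m| with hfu
  set fw : Fin d → ℝ := fun m => |w m| with hfw
  set U := descRearr fu with hU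
  set W := descRearr fw with hW
  set L : ℝ := Real.log ((2 : ℝ) ^ (i + 1) / 2 ^ j) with hLdef
  have h2j : (0:ℝ) < 2 ^ j := by positivity
  have hrat : (2:ℝ) ≤ (2:ℝ) ^ (i + 1) / 2 ^ j := by
    rw [le_div_iff₀ h2j]
    calc (2:ℝ) * 2 ^ j = 2 ^ (j + 1) := by ring
      _ ≤ 2 ^ (i + 1) := by
        apply pow_le_pow_right₀ (by norm_num) (by omega)
  have hL : 0 < L := Real.log_pos (by linarith)
  -- nonnegativity
  have hUnn : ∀ l, 0 ≤ U l := fun l => by rw [hU, descRearr_eq]; exact abs_nonneg _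
  have hWnn : ∀ l, 0 ≤ W l := fun l => by rw [hW, descRearr_eq]; exact abs_nonneg _
  -- W vanishes past 2^j
  have hWzero : ∀ l : Fin d, 2 ^ j ≤ (l:ℕ) → W l = 0 :=
    descRearr_eq_zero fw (fun x => abs_nonneg _)
      (fun x hx => by simp [hfw, hw x hx])
  -- sums of squares
  have hw1 : ∑ l : Fin d, W l ^ 2 = 1 := by
    rw [hW, sum_descRearr_comp fw (fun x => x ^ 2)]
    have : ∑ l : Fin d, fw l ^ 2 = ∑ l : Fin d, w l ^ 2 := by
      simp [hfw, sq_abs]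
    rw [this]
    exact Real.sqrt_eq_one.mp hwn
  set T := Finset.univ.filter (fun l : Fin d => (l:ℕ) < 2 ^ j) with hT
  have hsumT : ∑ l : Fin d, U l * W l = ∑ l ∈ T, U l * W l := by
    refine (Finset.sum_subset (Finset.filter_subset _ _) ?_).symm
    intro x _ hx
    have : 2 ^ j ≤ (x:ℕ) := by
      simp only [hT, Finset.mem_filter, Finset.mem_univ, true_and, not_lt] at hx
      exact hx
    rw [hWzero x this, mul_zero]
  -- bound on ∑_T W^2
  have hWT : ∑ l ∈ T, W l ^ 2 ≤ 1 := by
    rw [← hw1]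
    exact Finset.sum_le_sum_of_subset_of_nonneg (Finset.filter_subset _ _)
      (fun x _ _ => sq_nonneg _)
  -- bound on ∑_T U^2
  set e : Equiv.Perm (Fin d) := Fin.revPerm.trans (Tuple.sort fu) with he
  set S' : Finset (Fin d) := T.image e with hS'
  have hTU : ∑ l ∈ T, U l ^ 2 = ∑ x ∈ S', u x ^ 2 := by
    rw [hS', Finset.sum_image (fun a _ b _ hab => e.injective hab)]
    apply Finset.sum_congr rfl
    intro l _
    show descRearr fu l ^ 2 = u (e l) ^ 2
    rw [descRearr_eq]
    exact sq_abs _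
  set S0 : Finset (Fin d) := S'.filter (fun x => (x:ℕ) < 2 ^ i) with hS0
  have hS'S0 : ∑ x ∈ S', u x ^ 2 = ∑ x ∈ S0, u x ^ 2 := by
    refine (Finset.sum_subset (Finset.filter_subset _ _) ?_).symm
    intro x hxS' hx
    have : 2 ^ i ≤ (x:ℕ) := by
      by_contra hlt
      exact hx (Finset.mem_filter.mpr ⟨hxS', by omega⟩)
    rw [hu x this]
    ring
  have hcardS0 : S0.card ≤ 2 ^ j := by
    calc S0.card ≤ S'.card := Finset.card_filter_le _ _
      _ ≤ T.card := Finset.card_image_le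
      _ ≤ 2 ^ j := card_filter_lt
  have hUT : ∑ l ∈ T, U l ^ 2 ≤ C / L ^ 4 := by
    rw [hTU, hS'S0]
    rcases Finset.eq_empty_or_nonempty S0 with hemp | hne
    · rw [hemp, Finset.sum_empty]
      positivity
    · have hb := hdel S0 hne (fun l hl => (Finset.mem_filter.mp hl).2)
      refine hb.trans ?_
      have hc1 : (1:ℝ) ≤ (S0.card : ℝ) := by
        exact_mod_cast Nat.one_le_iff_ne_zero.mpr (Finset.card_ne_zero_of_mem hne.choose_spec)
      have hcle : (S0.card : ℝ) ≤ (2:ℝ) ^ j := by exact_mod_cast hcardS0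
      have hdivle : (2:ℝ) ^ (i+1) / 2 ^ j ≤ (2:ℝ) ^ (i+1) / S0.card := by
        apply div_le_div_of_nonneg_left (by positivity) (by linarith) hcle
      have hLle : L ≤ Real.log ((2:ℝ) ^ (i+1) / S0.card) :=
        Real.log_le_log (by linarith) hdivle
      have hL4 : L ^ 4 ≤ (Real.log ((2:ℝ) ^ (i+1) / S0.card)) ^ 4 := by
        apply pow_le_pow_left₀ hL.le hLle
      exact div_le_div_of_nonneg_left hC.le (by positivity) hL4
  -- Cauchy-Schwarz
  have hcs := Finset.sum_mul_sq_le_sq_mul_sq T U W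
  have hsum_nn : 0 ≤ ∑ l ∈ T, U l * W l :=
    Finset.sum_nonneg fun l _ => mul_nonneg (hUnn l) (hWnn l)
  have hsq : (∑ l ∈ T, U l * W l) ^ 2 ≤ C / L ^ 4 := by
    calc (∑ l ∈ T, U l * W l) ^ 2 ≤ (∑ l ∈ T, U l ^ 2) * ∑ l ∈ T, W l ^ 2 := hcs
      _ ≤ (C / L ^ 4) * 1 := by
        apply mul_le_mul hUT hWT (Finset.sum_nonneg fun l _ => sq_nonneg _) (by positivity)
      _ = C / L ^ 4 := mul_one _
  have hfinal : ∑ l ∈ T, U l * W l ≤ Real.sqrt C / L ^ 2 := by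
    have h1 : ∑ l ∈ T, U l * W l ≤ Real.sqrt (C / L ^ 4) := by
      rw [Real.le_sqrt hsum_nn (by positivity)]
      exact hsq
    refine h1.trans_eq ?_
    rw [Real.sqrt_div hC.le]
    congr 1
    rw [show L ^ 4 = (L ^ 2) ^ 2 by ring, Real.sqrt_sq (by positivity)]
  rw [abs_of_nonneg (by rw [hsumT]; exact hsum_nn), hsumT]
  exact hfinal
end

section
/- Let Γ_d be the group of signed permutations acting on R^d (or the group S_d ⋉ (S^1)^d acting on C^d). For any subspace W ⊆ C^d and any v ∈ C^d, sup_{γ∈Γ_d} ‖proj_W(γ v)‖_2 = sup_{w ∈ S(W)} ⟨v^≻, w^≻⟩, where x^≻ denotes the vector of absolute values of coordinates of x sorted in decreasing order. -/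
noncomputable def sortPerm {d : ℕ} (f : Fin d → ℝ) : Equiv.Perm (Fin d) :=
  Fin.revPerm.trans (Tuple.sort f)

lemma descRearr_apply {d : ℕ} (f : Fin d → ℝ) (i : Fin d) :
    descRearr f i = f (sortPerm f i) := rfl

lemma monovary_descRearr {d : ℕ} (a b : Fin d → ℝ) :
    Monovary (descRearr a) (descRearr b) := by
  intro i j hb
  rcases le_total j i with h | h
  · exact descRearr_antitone a h
  · exact absurd (descRearr_antitone b h) (not_le.2 hb)

lemma sum_mul_le_descRearr {d : ℕ} (a b : Fin d → ℝ) (σ : Equiv.Perm (Fin d)) :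
    ∑ i, a (σ i) * b i ≤ ∑ i, descRearr a i * descRearr b i := by
  set ea := sortPerm a
  set eb := sortPerm b
  have ha : ∀ i, a i = descRearr a (ea.symm i) := by
    intro i; rw [descRearr_apply]; simp [ea]
  have hb : ∀ i, b i = descRearr b (eb.symm i) := by
    intro i; rw [descRearr_apply]; simp [eb]
  calc ∑ i, a (σ i) * b i
      = ∑ i, descRearr a (ea.symm (σ i)) * descRearr b (eb.symm i) := by
        refine Finset.sum_congr rfl fun i _ => ?_
        rw [← ha, ← hb]
    _ = ∑ j, descRearr a (ea.symm (σ (eb j))) * descRearr b j := by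
        rw [← Equiv.sum_comp eb
          (fun i => descRearr a (ea.symm (σ i)) * descRearr b (eb.symm i))]
        simp
    _ ≤ ∑ i, descRearr a i * descRearr b i :=
        (monovary_descRearr a b).sum_comp_perm_mul_le_sum_mul
          (σ := eb.trans (σ.trans ea.symm))

lemma exists_perm_descRearr {d : ℕ} (a b : Fin d → ℝ) :
    ∃ τ : Equiv.Perm (Fin d),
      ∑ i, descRearr a i * descRearr b i = ∑ i, a (τ i) * b i := by
  set ea := sortPerm a
  set eb := sortPerm b
  refine ⟨eb.symm.trans ea, ?_⟩
  calc ∑ i, descRearr a i * descRearr b i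
      = ∑ i, a (ea i) * b (eb i) := by
        refine Finset.sum_congr rfl fun i _ => ?_
        rw [descRearr_apply, descRearr_apply]
    _ = ∑ j, a (ea (eb.symm j)) * b j := by
        rw [← Equiv.sum_comp eb (fun j => a (ea (eb.symm j)) * b j)]
        simp
    _ = ∑ j, a ((eb.symm.trans ea) j) * b j := by simp [Equiv.trans_apply]

lemma coord_norm_le {d : ℕ} (w : EuclideanSpace ℂ (Fin d)) (i : Fin d) :
    ‖w i‖ ≤ ‖w‖ := by
  rw [EuclideanSpace.norm_eq]
  have h1 : ‖w i‖ = Real.sqrt (‖w i‖ ^ 2) := (Real.sqrt_sq (norm_nonneg _)).symm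
  rw [h1]
  apply Real.sqrt_le_sqrt
  exact Finset.single_le_sum (fun j _ => sq_nonneg ‖w j‖) (Finset.mem_univ i)

/-- For the group `Γ_d = S_d ⋉ (S¹)^d` of permutations and unit scalings of coordinates,
any subspace `W ⊆ ℂ^d` and any `v ∈ ℂ^d`:
`sup_{γ∈Γ_d} ‖proj_W (γ v)‖ = sup_{w ∈ S(W)} ⟨v^≻, w^≻⟩`. -/
theorem stmt10 (d : ℕ) (W : Submodule ℂ (EuclideanSpace ℂ (Fin d)))
    (v : EuclideanSpace ℂ (Fin d)) :
    sSup {r : ℝ | ∃ (σ : Equiv.Perm (Fin d)) (u : Fin d → ℂ), (∀ i, ‖u i‖ = 1) ∧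
        r = ‖W.orthogonalProjectionOnto
          ((WithLp.equiv 2 (Fin d → ℂ)).symm fun i => u i * v (σ i))‖}
    = sSup {r : ℝ | ∃ w ∈ W, ‖w‖ = 1 ∧
        r = ∑ i : Fin d, descRearr (fun l => ‖v l‖) i * descRearr (fun l => ‖w l‖) i} := by
  classical
  set A : Set ℝ := {r : ℝ | ∃ (σ : Equiv.Perm (Fin d)) (u : Fin d → ℂ), (∀ i, ‖u i‖ = 1) ∧
        r = ‖W.orthogonalProjectionOnto
          ((WithLp.equiv 2 (Fin d → ℂ)).symm fun i => u i * v (σ i))‖} with hA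
  set B : Set ℝ := {r : ℝ | ∃ w ∈ W, ‖w‖ = 1 ∧
        r = ∑ i : Fin d, descRearr (fun l => ‖v l‖) i * descRearr (fun l => ‖w l‖) i} with hB
  by_cases hW : W = ⊥
  · subst hW
    have hAeq : A = {0} := by
      ext r
      simp only [hA, Set.mem_setOf_eq, Set.mem_singleton_iff]
      constructor
      · rintro ⟨σ, u, hu, rfl⟩
        simp [Submodule.orthogonalProjectionOnto_bot]
      · rintro rfl
        exact ⟨1, fun _ => 1, fun i => by simp, by simp [Submodule.orthogonalProjectionOnto_bot]⟩
    have hBeq : B = ∅ := by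
      ext r
      simp only [hB, Set.mem_setOf_eq, Set.mem_empty_iff_false, iff_false]
      rintro ⟨w, hw, hw1, _⟩
      rw [Submodule.mem_bot] at hw
      rw [hw] at hw1
      simp at hw1
    rw [hAeq, hBeq, Real.sSup_empty, csSup_singleton]
  · -- W ≠ ⊥
    obtain ⟨w0, hw0W, hw0ne⟩ := Submodule.exists_mem_ne_zero_of_ne_bot hW
    set w1 : EuclideanSpace ℂ (Fin d) := (‖w0‖⁻¹ : ℝ) • w0 with hw1def
    have hw1W : w1 ∈ W := W.smul_of_tower_mem _ hw0W
    have hw1 : ‖w1‖ = 1 := by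
      rw [hw1def, norm_smul]
      simp [norm_ne_zero_iff.2 hw0ne]
    -- norms of the rotated vectors
    have hxnorm : ∀ (σ : Equiv.Perm (Fin d)) (u : Fin d → ℂ), (∀ i, ‖u i‖ = 1) →
        ‖(WithLp.equiv 2 (Fin d → ℂ)).symm (fun i => u i * v (σ i))‖ = ‖v‖ := by
      intro σ u hu
      rw [EuclideanSpace.norm_eq, EuclideanSpace.norm_eq]
      congr 1
      calc ∑ i, ‖(WithLp.equiv 2 (Fin d → ℂ)).symm (fun i => u i * v (σ i)) i‖ ^ 2
          = ∑ i, ‖v (σ i)‖ ^ 2 := by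
            refine Finset.sum_congr rfl fun i _ => ?_
            simp [norm_mul, hu i]
        _ = ∑ i, ‖v i‖ ^ 2 := Equiv.sum_comp σ (fun i => ‖v i‖ ^ 2)
    -- boundedness of A
    have hAbdd : BddAbove A := by
      refine ⟨‖v‖, ?_⟩
      rintro r ⟨σ, u, hu, rfl⟩
      calc ‖W.orthogonalProjectionOnto ((WithLp.equiv 2 (Fin d → ℂ)).symm fun i => u i * v (σ i))‖
          ≤ 1 * ‖(WithLp.equiv 2 (Fin d → ℂ)).symm fun i => u i * v (σ i)‖ := by
            have := W.orthogonalProjectionOnto.le_opNorm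
              ((WithLp.equiv 2 (Fin d → ℂ)).symm fun i => u i * v (σ i))
            calc _ ≤ ‖W.orthogonalProjectionOnto‖ *
                ‖(WithLp.equiv 2 (Fin d → ℂ)).symm fun i => u i * v (σ i)‖ := this
              _ ≤ _ := by
                gcongr
                exact Submodule.orthogonalProjectionOnto_norm_le W
        _ = ‖v‖ := by rw [one_mul, hxnorm σ u hu]
    -- boundedness of B
    have hBbdd : BddAbove B := by
      refine ⟨(d : ℝ) * ‖v‖, ?_⟩
      rintro r ⟨w, hwW, hwn, rfl⟩
      calc ∑ i : Fin d, descRearr (fun l => ‖v l‖) i * descRearr (fun l => ‖w l‖) i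
          ≤ ∑ _i : Fin d, ‖v‖ * 1 := by
            refine Finset.sum_le_sum fun i _ => ?_
            have h1 : descRearr (fun l => ‖v l‖) i ≤ ‖v‖ := by
              rw [descRearr_apply]; exact coord_norm_le v _
            have h2 : descRearr (fun l => ‖w l‖) i ≤ 1 := by
              rw [descRearr_apply]
              calc ‖w (sortPerm (fun l => ‖w l‖) i)‖ ≤ ‖w‖ := coord_norm_le w _
                _ = 1 := hwn
            have h3 : 0 ≤ descRearr (fun l => ‖v l‖) i := by
              rw [descRearr_apply]; exact norm_nonneg _
            have h4 : 0 ≤ descRearr (fun l => ‖w l‖) i := by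
              rw [descRearr_apply]; exact norm_nonneg _
            exact mul_le_mul h1 h2 h4 (norm_nonneg v)
        _ = (d : ℝ) * ‖v‖ := by simp [mul_comm]
    -- B has a nonnegative element
    have hBelem : (∑ i : Fin d, descRearr (fun l => ‖v l‖) i *
        descRearr (fun l => ‖w1 l‖) i) ∈ B := ⟨w1, hw1W, hw1, rfl⟩
    have hBsup_nonneg : 0 ≤ sSup B := by
      refine le_trans ?_ (le_csSup hBbdd hBelem)
      refine Finset.sum_nonneg fun i _ => mul_nonneg ?_ ?_ <;>
        · rw [descRearr_apply]; exact norm_nonneg _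
    -- A has a nonnegative element
    have hAelem : ‖W.orthogonalProjectionOnto
        ((WithLp.equiv 2 (Fin d → ℂ)).symm fun i => (1 : ℂ) * v ((1 : Equiv.Perm (Fin d)) i))‖
        ∈ A := ⟨1, fun _ => 1, fun _ => by simp, rfl⟩
    have hAsup_nonneg : 0 ≤ sSup A := le_trans (norm_nonneg _) (le_csSup hAbdd hAelem)
    apply le_antisymm
    · -- sSup A ≤ sSup B
      refine Real.sSup_le ?_ hBsup_nonneg
      rintro r ⟨σ, u, hu, rfl⟩
      set x : EuclideanSpace ℂ (Fin d) :=
        (WithLp.equiv 2 (Fin d → ℂ)).symm (fun i => u i * v (σ i)) with hxdef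
      set p : W := W.orthogonalProjectionOnto x with hpdef
      by_cases hp : (p : EuclideanSpace ℂ (Fin d)) = 0
      · have : ‖p‖ = 0 := by
          rw [show ‖p‖ = ‖(p : EuclideanSpace ℂ (Fin d))‖ from rfl, hp, norm_zero]
        rw [this]
        exact hBsup_nonneg
      · set w : EuclideanSpace ℂ (Fin d) :=
          ((‖(p : EuclideanSpace ℂ (Fin d))‖ : ℂ))⁻¹ • (p : EuclideanSpace ℂ (Fin d)) with hwdef
        have hwW : w ∈ W := W.smul_mem _ p.2
        have hpnorm : ‖(p : EuclideanSpace ℂ (Fin d))‖ ≠ 0 := norm_ne_zero_iff.2 hp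
        have hwn : ‖w‖ = 1 := by
          rw [hwdef, norm_smul]
          simp [hpnorm]
        -- inner product identity
        have hinner : inner ℂ x w = (‖(p : EuclideanSpace ℂ (Fin d))‖ : ℂ) := by
          have h1 : (inner ℂ x w : ℂ) = inner ℂ (p : EuclideanSpace ℂ (Fin d)) w := by
            have h0 : (inner ℂ (x - (p : EuclideanSpace ℂ (Fin d))) w : ℂ) = 0 :=
              W.starProjection_inner_eq_zero x w hwW
            have := inner_sub_left (𝕜 := ℂ) x (p : EuclideanSpace ℂ (Fin d)) w
            rw [h0] at this
            linear_combination -this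
          rw [h1, hwdef, inner_smul_right, inner_self_eq_norm_sq_to_K]
          have hne : (‖(p : EuclideanSpace ℂ (Fin d))‖ : ℂ) ≠ 0 :=
            Complex.ofReal_ne_zero.2 hpnorm
          field_simp
          rfl
        have hle : ‖p‖ ≤ ∑ i, ‖v (σ i)‖ * ‖w i‖ := by
          have h2 : ‖p‖ = ‖(inner ℂ x w : ℂ)‖ := by
            rw [hinner, Complex.norm_real, Real.norm_eq_abs, abs_of_nonneg (norm_nonneg _),
              Submodule.norm_coe]
          rw [h2]
          calc ‖(inner ℂ x w : ℂ)‖ = ‖∑ i, (starRingEnd ℂ) (x i) * w i‖ := by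
                rw [PiLp.inner_apply]
                simp [RCLike.inner_apply, mul_comm]
            _ ≤ ∑ i, ‖(starRingEnd ℂ) (x i) * w i‖ := norm_sum_le _ _
            _ = ∑ i, ‖v (σ i)‖ * ‖w i‖ := by
                refine Finset.sum_congr rfl fun i _ => ?_
                have hxi : x i = u i * v (σ i) := rfl
                rw [norm_mul, RCLike.norm_conj, hxi, norm_mul, hu i, one_mul]
        calc ‖p‖ ≤ ∑ i, ‖v (σ i)‖ * ‖w i‖ := hle
          _ ≤ ∑ i, descRearr (fun l => ‖v l‖) i * descRearr (fun l => ‖w l‖) i :=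
            sum_mul_le_descRearr (fun l => ‖v l‖) (fun l => ‖w l‖) σ
          _ ≤ sSup B := le_csSup hBbdd ⟨w, hwW, hwn, rfl⟩
    · -- sSup B ≤ sSup A
      refine Real.sSup_le ?_ hAsup_nonneg
      rintro r ⟨w, hwW, hwn, rfl⟩
      obtain ⟨τ, hτ⟩ := exists_perm_descRearr (fun l => ‖v l‖) (fun l => ‖w l‖)
      set c : Fin d → ℂ := fun i => (starRingEnd ℂ) (v (τ i)) * w i with hcdef
      set u : Fin d → ℂ := fun i => if c i = 0 then 1 else c i / (‖c i‖ : ℂ) with hudef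
      have hu : ∀ i, ‖u i‖ = 1 := by
        intro i
        by_cases h : c i = 0
        · simp [hudef, h]
        · have : (‖c i‖ : ℝ) ≠ 0 := norm_ne_zero_iff.2 h
          simp only [hudef, if_neg h, norm_div, Complex.norm_real, Real.norm_eq_abs,
            abs_of_nonneg (norm_nonneg _)]
          exact div_self this
      have hkey : ∀ i, (starRingEnd ℂ) (u i * v (τ i)) * w i
          = ((‖v (τ i)‖ * ‖w i‖ : ℝ) : ℂ) := by
        intro i
        have hc : ‖c i‖ = ‖v (τ i)‖ * ‖w i‖ := by
          rw [hcdef, norm_mul, RCLike.norm_conj]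
        have step : (starRingEnd ℂ) (u i) * c i = ((‖c i‖ : ℝ) : ℂ) := by
          by_cases h : c i = 0
          · simp [hudef, h]
          · have hne : ((‖c i‖ : ℝ) : ℂ) ≠ 0 := by
              exact_mod_cast Complex.ofReal_ne_zero.2 (norm_ne_zero_iff.2 h)
            rw [hudef]
            simp only [if_neg h, map_div₀, Complex.conj_ofReal]
            rw [div_mul_eq_mul_div, RCLike.conj_mul, sq, mul_div_assoc]
            field_simp
            rfl
        calc (starRingEnd ℂ) (u i * v (τ i)) * w i
            = (starRingEnd ℂ) (u i) * c i := by rw [hcdef]; rw [map_mul]; ring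
          _ = ((‖c i‖ : ℝ) : ℂ) := step
          _ = ((‖v (τ i)‖ * ‖w i‖ : ℝ) : ℂ) := by rw [hc]
      set x : EuclideanSpace ℂ (Fin d) :=
        (WithLp.equiv 2 (Fin d → ℂ)).symm (fun i => u i * v (τ i)) with hxdef
      have hinner : (inner ℂ x w : ℂ) = ((∑ i, ‖v (τ i)‖ * ‖w i‖ : ℝ) : ℂ) := by
        rw [PiLp.inner_apply]
        push_cast
        refine Finset.sum_congr rfl fun i _ => ?_
        have hxi : x i = u i * v (τ i) := rfl
        rw [RCLike.inner_apply, hxi, mul_comm (w i), hkey i]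
        push_cast
        ring
      set p : W := W.orthogonalProjectionOnto x with hpdef
      have hproj : (inner ℂ x w : ℂ) = inner ℂ (p : EuclideanSpace ℂ (Fin d)) w := by
        have h0 : (inner ℂ (x - (p : EuclideanSpace ℂ (Fin d))) w : ℂ) = 0 :=
          W.starProjection_inner_eq_zero x w hwW
        have := inner_sub_left (𝕜 := ℂ) x (p : EuclideanSpace ℂ (Fin d)) w
        rw [h0] at this
        linear_combination -this
      have hre : (∑ i, ‖v (τ i)‖ * ‖w i‖ : ℝ) ≤ ‖p‖ := by
        have h1 : (∑ i, ‖v (τ i)‖ * ‖w i‖ : ℝ)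
            = RCLike.re (inner ℂ (p : EuclideanSpace ℂ (Fin d)) w : ℂ) := by
          rw [← hproj, hinner]
          simp
        rw [h1]
        calc RCLike.re (inner ℂ (p : EuclideanSpace ℂ (Fin d)) w : ℂ)
            ≤ ‖(p : EuclideanSpace ℂ (Fin d))‖ * ‖w‖ := re_inner_le_norm _ _
          _ = ‖p‖ := by rw [hwn, mul_one, Submodule.norm_coe]
      calc ∑ i : Fin d, descRearr (fun l => ‖v l‖) i * descRearr (fun l => ‖w l‖) i
          = ∑ i, ‖v (τ i)‖ * ‖w i‖ := hτ
        _ ≤ ‖p‖ := hre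
        _ ≤ sSup A := le_csSup hAbdd ⟨τ, u, hu, rfl⟩
end
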